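/- arXiv:2401.00592 — 2 statements merged into one kernel-verified Lean document; each statement's English description precedes it below -/
import Mathlib

section
/- Theorem (location family with symmetric distribution): Let X⁰ be an integrable real-valued random variable whose distribution is symmetric about 0 (X⁰ and -X⁰ have the same law), let μ ∈ ℝ, and set X^μ = X⁰ + μ and X^{-μ} = X⁰ - μ. Let I : ℝ → [0,1] be measurable with I(x) + I(-x) = 1 for all x. Then E[I(X^{-μ})·X^{-μ}] = E[I(X^μ)·X^μ] - μ. -/
open MeasureTheory ProbabilityTheory

/-- Location family with symmetric distribution (single agent): if `X⁰` is
integrable with law symmetric about `0`, `X^μ = X⁰ + μ`, `X^{-μ} = X⁰ - μ`,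
and `I` is an antisymmetric acceptance rule with values in `[0,1]`, then
`E[I(X^{-μ})·X^{-μ}] = E[I(X^μ)·X^μ] - μ`. -/
theorem location_family_symmetric_scalar {Ω : Type*} [MeasureSpace Ω]
    [IsProbabilityMeasure (ℙ : Measure Ω)]
    (X0 : Ω → ℝ) (hX0 : Integrable X0) (hmeas : Measurable X0)
    (hsymm : Measure.map X0 (ℙ : Measure Ω) = Measure.map (fun ω => -(X0 ω)) ℙ)
    (μ : ℝ)
    (I : ℝ → ℝ) (hI : Measurable I)
    (hI01 : ∀ x, I x ∈ Set.Icc (0 : ℝ) 1)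
    (hanti : ∀ x, I x + I (-x) = 1) :
    (∫ ω, I (X0 ω - μ) * (X0 ω - μ)) = (∫ ω, I (X0 ω + μ) * (X0 ω + μ)) - μ := by
  set f : ℝ → ℝ := fun x => I x * x with hf
  have hfm : Measurable f := hI.mul measurable_id
  have hXμ : Integrable (fun ω => X0 ω + μ) := hX0.add (integrable_const μ)
  have hbound : ∀ x, |f x| ≤ |x| := by
    intro x
    have h := hI01 x
    simp only [hf, abs_mul]
    calc |I x| * |x| ≤ 1 * |x| := by
          apply mul_le_mul_of_nonneg_right _ (abs_nonneg x)
          rw [abs_le]; exact ⟨by linarith [h.1], h.2⟩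
      _ = |x| := one_mul _
  have hint1 : Integrable (fun ω => f (X0 ω + μ)) := by
    refine hXμ.mono ((hfm.comp (hmeas.add_const μ)).aestronglyMeasurable) ?_
    filter_upwards with ω using hbound (X0 ω + μ)
  have hEX0 : ∫ ω, X0 ω = 0 := by
    have h1 : ∫ ω, X0 ω = ∫ x, x ∂(Measure.map X0 ℙ) :=
      (integral_map hmeas.aemeasurable aestronglyMeasurable_id).symm
    have h2 : ∫ x, x ∂(Measure.map (fun ω => -(X0 ω)) ℙ) = ∫ ω, -(X0 ω) :=
      integral_map hmeas.neg.aemeasurable aestronglyMeasurable_id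
    have h3 : (∫ ω, X0 ω) = ∫ ω, -(X0 ω) := by rw [h1, hsymm, h2]
    rw [integral_neg] at h3
    linarith
  have key : (∫ ω, f (X0 ω - μ)) = ∫ ω, f (-(X0 ω) - μ) := by
    have hg : Measurable fun x => f (x - μ) := hfm.comp (measurable_id.sub_const μ)
    rw [← integral_map hmeas.aemeasurable hg.aestronglyMeasurable,
      ← integral_map (show Measurable fun ω => -(X0 ω) from hmeas.neg).aemeasurable hg.aestronglyMeasurable, hsymm]
  have hptw : ∀ ω, f (-(X0 ω) - μ) = f (X0 ω + μ) - (X0 ω + μ) := by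
    intro ω
    have h := hanti (X0 ω + μ)
    have : -(X0 ω) - μ = -(X0 ω + μ) := by ring
    rw [this]
    have h2 : I (-(X0 ω + μ)) = 1 - I (X0 ω + μ) := by linarith
    simp only [hf]
    rw [h2]; ring
  calc (∫ ω, f (X0 ω - μ)) = ∫ ω, (f (X0 ω + μ) - (X0 ω + μ)) := by
        rw [key]; exact integral_congr_ae (Filter.Eventually.of_forall hptw)
    _ = (∫ ω, f (X0 ω + μ)) - ∫ ω, (X0 ω + μ) := integral_sub hint1 hXμ
    _ = (∫ ω, f (X0 ω + μ)) - μ := by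
        rw [integral_add hX0 (integrable_const μ), hEX0, integral_const]
        simp
end

section
/- Multivariate location family theorem: Let X⁰ be an integrable ℝⁿ-valued random vector with law symmetric about 0 (X⁰ and -X⁰ identically distributed), μ ∈ ℝ, X^μ = X⁰ + μ·𝟙 and X^{-μ} = X⁰ - μ·𝟙 where 𝟙 = (1,...,1). Let I : ℝⁿ → [0,1] be measurable with I(x) + I(-x) = 1 for all x ∈ ℝⁿ. Then E[I(X^{-μ})·X^{-μ}] = E[I(X^μ)·X^μ] - μ·𝟙. -/
open MeasureTheory ProbabilityTheory

/-- Multivariate location family theorem: if `X⁰` is an integrable random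
vector with law symmetric about the origin, `X^μ = X⁰ + μ·𝟙`, and `I` is an
antisymmetric acceptance rule with values in `[0,1]`, then
`E[I(X^{-μ})·X^{-μ}] = E[I(X^μ)·X^μ] - μ·𝟙`. -/
theorem location_family_symmetric_vector {Ω : Type*} [MeasureSpace Ω]
    [IsProbabilityMeasure (ℙ : Measure Ω)] {n : ℕ}
    (X0 : Ω → (Fin n → ℝ)) (hX0 : Integrable X0) (hmeas : Measurable X0)
    (hsymm : Measure.map X0 (ℙ : Measure Ω) = Measure.map (fun ω => -(X0 ω)) ℙ)
    (μ : ℝ)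
    (I : (Fin n → ℝ) → ℝ) (hI : Measurable I)
    (hI01 : ∀ x, I x ∈ Set.Icc (0 : ℝ) 1)
    (hanti : ∀ x, I x + I (-x) = 1) :
    (∫ ω, I (X0 ω - μ • (1 : Fin n → ℝ)) • (X0 ω - μ • (1 : Fin n → ℝ)))
      = (∫ ω, I (X0 ω + μ • (1 : Fin n → ℝ)) • (X0 ω + μ • (1 : Fin n → ℝ)))
        - μ • (1 : Fin n → ℝ) := by
  set c : Fin n → ℝ := μ • (1 : Fin n → ℝ) with hc
  have hintc : Integrable (fun _ : Ω => c) (ℙ) := integrable_const c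
  have hXc : Integrable (fun ω => X0 ω + c) := hX0.add hintc
  have hfmeas : Measurable (fun x : Fin n → ℝ => I (x - c) • (x - c)) :=
    (hI.comp (measurable_id.sub measurable_const)).smul
      (measurable_id.sub measurable_const)
  -- integrability of the plus-side integrand
  have h2 : Integrable (fun ω => I (X0 ω + c) • (X0 ω + c)) := by
    refine Integrable.mono' hXc.norm
      (((hI.comp (hmeas.add measurable_const)).smul
        (hmeas.add measurable_const)).aestronglyMeasurable) ?_
    filter_upwards with ω
    rw [norm_smul]
    have h01 := hI01 (X0 ω + c)
    have : ‖I (X0 ω + c)‖ ≤ 1 := by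
      rw [Real.norm_eq_abs, abs_le]; constructor <;> [linarith [h01.1]; exact h01.2]
    nlinarith [norm_nonneg (X0 ω + c), norm_nonneg (I (X0 ω + c))]
  -- E[X0] = 0
  have hEX0 : (∫ ω, X0 ω) = 0 := by
    have hid : (∫ x, x ∂(Measure.map X0 (ℙ : Measure Ω)))
        = ∫ x, x ∂(Measure.map (fun ω => -(X0 ω)) (ℙ : Measure Ω)) := by
      rw [hsymm]
    have e1 : (∫ x, x ∂(Measure.map X0 (ℙ : Measure Ω))) = ∫ ω, X0 ω :=
      integral_map hmeas.aemeasurable measurable_id.aestronglyMeasurable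
    have e2 : (∫ x, x ∂(Measure.map (fun ω => -(X0 ω)) (ℙ : Measure Ω)))
        = ∫ ω, -(X0 ω) :=
      integral_map hmeas.neg.aemeasurable measurable_id.aestronglyMeasurable
    rw [e1, e2, integral_neg] at hid
    have h2' : (2 : ℝ) • (∫ ω, X0 ω) = 0 := by
      rw [two_smul]; nth_rewrite 2 [hid]; abel
    rcases smul_eq_zero.mp h2' with h | h
    · norm_num at h
    · exact h
  -- change of variables
  have key : (∫ ω, I (X0 ω - c) • (X0 ω - c))
      = ∫ ω, I (-(X0 ω) - c) • (-(X0 ω) - c) := by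
    rw [← integral_map hmeas.aemeasurable hfmeas.aestronglyMeasurable, hsymm,
      integral_map (φ := fun ω => -(X0 ω)) hmeas.neg.aemeasurable hfmeas.aestronglyMeasurable]
  have hpt : ∀ ω, I (-(X0 ω) - c) • (-(X0 ω) - c)
      = -(X0 ω + c) + I (X0 ω + c) • (X0 ω + c) := by
    intro ω
    have h1 : -(X0 ω) - c = -(X0 ω + c) := by abel
    have h2 : I (-(X0 ω + c)) = 1 - I (X0 ω + c) := by
      have := hanti (X0 ω + c); linarith
    rw [h1, h2]
    module
  rw [key]
  simp only [hpt]
  have hneg : Integrable (fun ω => -(X0 ω + c)) := hXc.neg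
  rw [integral_add hneg h2, integral_neg, integral_add hX0 hintc,
    integral_const, hEX0]
  simp only [measure_univ, probReal_univ, ENNReal.toReal_one, one_smul, zero_add]
  abel
end
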